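/- Let n₀, d₀, k be positive integers with d₀ dividing n₀ and gcd(n₀/d₀, k) = 1. Let L ⊆ ℤ^k be the subgroup generated by (n₀ℤ)^k and (d₀,…,d₀), and let S_k act on the finite quotient ℤ^k/L by permuting coordinates. Then the number of S_k-orbits on ℤ^k/L equals C(k + n₀ − 1, k) · d₀/n₀. -/

import Mathlib

/-- If two tuples into a linear order enumerate the same multiset, one is a
permutation of the other. -/
theorem exists_comp_perm_of_ofFn_perm {k : ℕ} {α : Type*} [LinearOrder α]
    {f g : Fin k → α} (h : (List.ofFn f).Perm (List.ofFn g)) :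
    ∃ σ : Equiv.Perm (Fin k), g = f ∘ σ := by
  have h1 : f ∘ Tuple.sort f = g ∘ Tuple.sort g :=
    List.ofFn_injective <|
      List.Perm.eq_of_sortedLE
        (Tuple.monotone_sort f).sortedLE_ofFn (Tuple.monotone_sort g).sortedLE_ofFn
        (((Tuple.sort f).ofFn_comp_perm f).trans (h.trans ((Tuple.sort g).ofFn_comp_perm g).symm))
  refine ⟨(Tuple.sort g).symm.trans (Tuple.sort f), ?_⟩
  funext i
  have := congrFun h1 ((Tuple.sort g).symm i)
  simp only [Function.comp_apply, Equiv.apply_symm_apply] at this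
  simpa [Equiv.trans_apply] using this.symm

/-- Let `L ⊆ ℤ^k` be the subgroup generated by `(n₀ℤ)^k` and `(d₀,…,d₀)`,
where `d₀ ∣ n₀` and `gcd(n₀/d₀, k) = 1`. The number of orbits of `S_k` acting on the
finite quotient `ℤ^k / L` by permuting coordinates equals `C(k + n₀ - 1, k) * d₀ / n₀`.
The orbit set is encoded as the quotient of `ℤ^k / L` by the relation identifying the
class of `s` with the class of `s ∘ σ` for every `σ ∈ S_k`. -/
theorem stmt11 (n₀ d₀ k : ℕ) (hn₀ : 0 < n₀) (hd₀ : 0 < d₀) (hk : 0 < k)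
    (hdvd : d₀ ∣ n₀) (hgcd : Nat.gcd (n₀ / d₀) k = 1) :
    Nat.card (Quot (fun x y : (Fin k → ℤ) ⧸ AddSubgroup.closure
          ({v : Fin k → ℤ | ∀ i, (n₀ : ℤ) ∣ v i} ∪ {fun _ => (d₀ : ℤ)}) =>
        ∃ σ : Equiv.Perm (Fin k), ∃ s : Fin k → ℤ,
          x = QuotientAddGroup.mk s ∧ y = QuotientAddGroup.mk (s ∘ σ))) =
      Nat.choose (k + n₀ - 1) k * d₀ / n₀ := by
  classical
  have hm0 : 0 < n₀ / d₀ := Nat.div_pos (Nat.le_of_dvd hn₀ hdvd) hd₀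
  set m := n₀ / d₀ with hm
  have hmd : m * d₀ = n₀ := Nat.div_mul_cancel hdvd
  haveI : NeZero n₀ := ⟨hn₀.ne'⟩
  haveI : NeZero m := ⟨hm0.ne'⟩
  set L : AddSubgroup (Fin k → ℤ) := AddSubgroup.closure
      ({v : Fin k → ℤ | ∀ i, (n₀ : ℤ) ∣ v i} ∪ {fun _ => (d₀ : ℤ)}) with hLdef
  -- the homomorphism `ZMod m →+ ZMod n₀` sending `1` to `d₀`
  have hker : (zmultiplesHom (ZMod n₀) (d₀ : ℕ)) (m : ℤ) = 0 := by
    show (m : ℤ) • ((d₀ : ℕ) : ZMod n₀) = 0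
    rw [zsmul_eq_mul]
    push_cast
    rw [← Nat.cast_mul, hmd, ZMod.natCast_self]
  set φ : ZMod m →+ ZMod n₀ := ZMod.lift m ⟨zmultiplesHom (ZMod n₀) (d₀ : ℕ), hker⟩ with hφdef
  have hφ : ∀ j : ℤ, φ ((j : ZMod m)) = ((j * d₀ : ℤ) : ZMod n₀) := by
    intro j
    rw [hφdef, ZMod.lift_coe]
    show j • ((d₀ : ℕ) : ZMod n₀) = _
    rw [zsmul_eq_mul]
    push_cast
    ring
  have hφval : ∀ t : ZMod m, φ t = (((t.val * d₀ : ℕ) : ℤ) : ZMod n₀) := by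
    intro t
    have ht : ((t.val : ℤ) : ZMod m) = t := by
      push_cast
      exact ZMod.natCast_rightInverse t
    have h := hφ (t.val : ℤ)
    rw [ht] at h
    rw [h]
    push_cast
    ring
  -- the shift action of `ZMod m` on `Sym (ZMod n₀) k`
  letI : VAdd (ZMod m) (Sym (ZMod n₀) k) := ⟨fun t A => Sym.map (· + φ t) A⟩
  have hvadd : ∀ (t : ZMod m) (A : Sym (ZMod n₀) k),
      (t +ᵥ A : Sym (ZMod n₀) k).1 = A.1.map (· + φ t) := fun _ _ => rfl
  letI : AddAction (ZMod m) (Sym (ZMod n₀) k) :=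
    { zero_vadd := fun A => by
        show Sym.map (· + φ 0) A = A
        simp [map_zero]
      add_vadd := fun t u A => by
        show Sym.map (· + φ (t + u)) A = Sym.map (· + φ t) (Sym.map (· + φ u) A)
        rw [Sym.map_map]
        congr 1
        funext x
        simp only [Function.comp_apply, map_add]
        ring }
  -- the action is free
  have hfree : ∀ (t : ZMod m) (A : Sym (ZMod n₀) k), t +ᵥ A = A → t = 0 := by
    intro t A hA
    have h1 : (A.1.map (· + φ t)).sum = A.1.sum := by
      rw [← hvadd t A, hA]
    have h2 : (A.1.map (· + φ t)).sum = A.1.sum + (k : ZMod n₀) * φ t := by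
      rw [Multiset.sum_map_add]
      simp [Multiset.map_id', A.2, Multiset.sum_replicate, nsmul_eq_mul]
    have h3 : (k : ZMod n₀) * φ t = 0 := by
      have h12 := h1.symm.trans h2
      exact (left_eq_add.mp h12)
    rw [hφval t] at h3
    have h4 : (n₀ : ℕ) ∣ k * (t.val * d₀) := by
      have : (((k * (t.val * d₀) : ℕ) : ℤ) : ZMod n₀) = 0 := by
        push_cast at h3 ⊢
        rw [← h3]
      rwa [Int.cast_natCast, ZMod.natCast_eq_zero_iff] at this
    have h5 : m ∣ k * t.val := by
      have h4' : m * d₀ ∣ (k * t.val) * d₀ := by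
        rw [hmd]; rw [← mul_assoc] at h4; exact h4
      exact (Nat.mul_dvd_mul_iff_right hd₀).mp h4'
    have h6 : m ∣ t.val := by
      have hco : Nat.Coprime m k := hgcd
      exact hco.dvd_of_dvd_mul_right (by rwa [mul_comm] at h5)
    have h7 : t.val = 0 := Nat.eq_zero_of_dvd_of_lt h6 (ZMod.val_lt t)
    have := ZMod.natCast_rightInverse (n := m) t
    rw [← this, h7, Nat.cast_zero]
  -- the multiset-of-values map
  set F0 : (Fin k → ℤ) → Sym (ZMod n₀) k := fun s =>
    ⟨((List.ofFn fun i => ((s i : ℤ) : ZMod n₀)) : Multiset (ZMod n₀)), by simp⟩ with hF0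
  have hshift : ∀ (s : Fin k → ℤ) (j : ℤ),
      F0 (fun i => s i + j * d₀) = ((j : ZMod m)) +ᵥ F0 s := by
    intro s j
    apply Subtype.ext
    rw [hvadd]
    show ((List.ofFn _ : List (ZMod n₀)) : Multiset (ZMod n₀))
        = Multiset.map _ ((List.ofFn _ : List (ZMod n₀)) : Multiset (ZMod n₀))
    rw [Multiset.map_coe, List.map_ofFn]
    refine congrArg _ (congrArg List.ofFn (funext fun i => ?_))
    show ((s i + j * d₀ : ℤ) : ZMod n₀) = ((s i : ℤ) : ZMod n₀) + φ ((j : ZMod m))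
    rw [hφ]
    push_cast
    ring
  have hperm : ∀ (s : Fin k → ℤ) (σ : Equiv.Perm (Fin k)), F0 (s ∘ σ) = F0 s := by
    intro s σ
    apply Subtype.ext
    show ((List.ofFn _ : List (ZMod n₀)) : Multiset (ZMod n₀)) = _
    exact Multiset.coe_eq_coe.mpr (σ.ofFn_comp_perm fun i => ((s i : ℤ) : ZMod n₀))
  -- every element of L is congruent to a multiple of the diagonal mod n₀
  have hLle : ∀ v ∈ L, ∃ t : ℤ, ∀ i, (n₀ : ℤ) ∣ v i - t * d₀ := by
    set M : AddSubgroup (Fin k → ℤ) :=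
      { carrier := {v | ∃ t : ℤ, ∀ i, (n₀ : ℤ) ∣ v i - t * d₀}
        zero_mem' := ⟨0, fun i => by simp⟩
        add_mem' := by
          rintro a b ⟨t, ht⟩ ⟨u, hu⟩
          refine ⟨t + u, fun i => ?_⟩
          have : (n₀ : ℤ) ∣ _ := dvd_add (ht i) (hu i)
          convert this using 1
          show (a + b) i - (t + u) * d₀ = _
          simp only [Pi.add_apply]
          ring
        neg_mem' := by
          rintro a ⟨t, ht⟩
          refine ⟨-t, fun i => ?_⟩
          have : (n₀ : ℤ) ∣ _ := dvd_neg.mpr (ht i)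
          convert this using 1
          show (-a) i - (-t) * d₀ = _
          simp only [Pi.neg_apply]
          ring }
    have hle : L ≤ M := by
      rw [hLdef]
      apply (AddSubgroup.closure_le M).mpr
      rintro v (hv | hv)
      · exact ⟨0, fun i => by simpa using hv i⟩
      · refine ⟨1, fun i => ?_⟩
        rw [Set.mem_singleton_iff] at hv
        subst hv
        simp
    exact fun v hv => hle hv
  -- the induced map to the orbit space
  set bigF : (Fin k → ℤ) → Quotient (AddAction.orbitRel (ZMod m) (Sym (ZMod n₀) k)) :=
    fun s => Quotient.mk (AddAction.orbitRel (ZMod m) (Sym (ZMod n₀) k)) (F0 s) with hbigF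
  have hwd : ∀ a b : Fin k → ℤ, (QuotientAddGroup.leftRel L) a b → bigF a = bigF b := by
    intro a b hab
    have hab' : -a + b ∈ L := QuotientAddGroup.leftRel_apply.mp hab
    obtain ⟨t, ht⟩ := hLle _ hab'
    have hFb : F0 b = ((t : ZMod m)) +ᵥ F0 a := by
      rw [← hshift a t]
      apply Subtype.ext
      show ((List.ofFn _ : List (ZMod n₀)) : Multiset (ZMod n₀))
          = ((List.ofFn _ : List (ZMod n₀)) : Multiset (ZMod n₀))
      refine congrArg _ (congrArg List.ofFn (funext fun i => ?_))
      show ((b i : ℤ) : ZMod n₀) = ((a i + t * d₀ : ℤ) : ZMod n₀)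
      have hi := ht i
      simp only [Pi.add_apply, Pi.neg_apply] at hi
      have h0 : ((b i - (a i + t * d₀) : ℤ) : ZMod n₀) = 0 := by
        rw [ZMod.intCast_zmod_eq_zero_iff_dvd]
        convert hi using 1
        ring
      push_cast at h0 ⊢
      exact sub_eq_zero.mp h0
    exact Quotient.sound (AddAction.mem_orbit_iff.mpr
      ⟨-(t : ZMod m), by rw [hFb, ← add_vadd]; simp⟩)
  set G1 : ((Fin k → ℤ) ⧸ L) → Quotient (AddAction.orbitRel (ZMod m) (Sym (ZMod n₀) k)) :=
    fun x => Quotient.liftOn' x bigF hwd with hG1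
  set r : ((Fin k → ℤ) ⧸ L) → ((Fin k → ℤ) ⧸ L) → Prop := fun x y =>
    ∃ σ : Equiv.Perm (Fin k), ∃ s : Fin k → ℤ,
      x = QuotientAddGroup.mk s ∧ y = QuotientAddGroup.mk (s ∘ σ) with hr
  set G : Quot r → Quotient (AddAction.orbitRel (ZMod m) (Sym (ZMod n₀) k)) :=
    Quot.lift G1 (by
      rintro x y ⟨σ, s, rfl, rfl⟩
      show bigF s = bigF (s ∘ σ)
      exact congrArg (Quotient.mk _) (hperm s σ).symm) with hG
  have hGmk : ∀ s : Fin k → ℤ, G (Quot.mk r (QuotientAddGroup.mk s)) = bigF s := fun _ => rfl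
  have hker2 : ∀ s s' : Fin k → ℤ, bigF s = bigF s' →
      Quot.mk r (QuotientAddGroup.mk s) = Quot.mk r (QuotientAddGroup.mk s') := by
    intro s s' hss
    have hrel := Quotient.exact hss
    obtain ⟨t, htv⟩ := AddAction.mem_orbit_iff.mp hrel
    have hts : ((t.val : ℤ) : ZMod m) = t := by
      push_cast
      exact ZMod.natCast_rightInverse t
    have hF : F0 (fun i => s' i + (t.val : ℤ) * d₀) = F0 s := by
      rw [hshift s' (t.val : ℤ), hts, htv]
    have hlist : (List.ofFn fun i => ((s' i + (t.val : ℤ) * d₀ : ℤ) : ZMod n₀)).Perm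
        (List.ofFn fun i => ((s i : ℤ) : ZMod n₀)) :=
      Multiset.coe_eq_coe.mp (congrArg Subtype.val hF)
    have hlist2 : (List.ofFn (ZMod.val ∘ fun i => ((s' i + (t.val : ℤ) * d₀ : ℤ) : ZMod n₀))).Perm
        (List.ofFn (ZMod.val ∘ fun i => ((s i : ℤ) : ZMod n₀))) := by
      have := hlist.map ZMod.val
      rwa [List.map_ofFn, List.map_ofFn] at this
    obtain ⟨σ, hσ⟩ := exists_comp_perm_of_ofFn_perm hlist2
    have hfun : ∀ i, ((s i : ℤ) : ZMod n₀) = ((s' (σ i) + (t.val : ℤ) * d₀ : ℤ) : ZMod n₀) := by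
      intro i
      apply ZMod.val_injective
      exact congrFun hσ i
    have hdvd2 : ∀ i, (n₀ : ℤ) ∣ s' (σ i) + (t.val : ℤ) * d₀ - s i := by
      intro i
      rw [← ZMod.intCast_zmod_eq_zero_iff_dvd]
      push_cast
      have h := hfun i
      push_cast at h
      rw [← h]
      ring
    have humem : (fun i => s' (σ i) + (t.val : ℤ) * d₀ - s i) ∈ L := by
      rw [hLdef]
      apply AddSubgroup.subset_closure
      left
      exact hdvd2
    have hdiag : (fun _ : Fin k => (d₀ : ℤ)) ∈ L := by
      rw [hLdef]
      exact AddSubgroup.subset_closure (Or.inr rfl)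
    have hmem : -s + s' ∘ σ ∈ L := by
      have heq : -s + s' ∘ σ = (fun i => s' (σ i) + (t.val : ℤ) * d₀ - s i)
          + (-(t.val : ℤ)) • (fun _ : Fin k => (d₀ : ℤ)) := by
        funext i
        simp only [Pi.add_apply, Pi.neg_apply, Pi.smul_apply, Function.comp_apply, smul_eq_mul]
        ring
      rw [heq]
      exact AddSubgroup.add_mem L humem (AddSubgroup.zsmul_mem L hdiag _)
    have hmkeq : (QuotientAddGroup.mk s : (Fin k → ℤ) ⧸ L) = QuotientAddGroup.mk (s' ∘ σ) :=
      QuotientAddGroup.eq.mpr hmem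
    calc Quot.mk r (QuotientAddGroup.mk s)
        = Quot.mk r (QuotientAddGroup.mk (s' ∘ σ)) := by rw [hmkeq]
      _ = Quot.mk r (QuotientAddGroup.mk s') := (Quot.sound ⟨σ, s', rfl, rfl⟩).symm
  have hGbij : Function.Bijective G := by
    constructor
    · intro x y
      induction x using Quot.ind with | _ a =>
      induction y using Quot.ind with | _ b =>
      induction a using QuotientAddGroup.induction_on with | _ s =>
      induction b using QuotientAddGroup.induction_on with | _ s' =>
      intro hxy
      exact hker2 s s' hxy
    · intro ω
      induction ω using Quotient.ind with | _ A =>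
      obtain ⟨s, hs⟩ : ∃ s : Fin k → ℤ, F0 s = A := by
        set l := A.1.toList with hl
        have hlen : l.length = k := by rw [hl, Multiset.length_toList, A.2]
        refine ⟨fun i => ((l.get (Fin.cast hlen.symm i)).val : ℤ), ?_⟩
        apply Subtype.ext
        show ((List.ofFn _ : List (ZMod n₀)) : Multiset (ZMod n₀)) = A.1
        have h1 : (List.ofFn fun i =>
            ((((l.get (Fin.cast hlen.symm i)).val : ℤ)) : ZMod n₀)) = l := by
          apply List.ext_get
          · simp [hlen]
          · intro n h1 h2
            rw [List.get_ofFn]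
            push_cast
            exact ZMod.natCast_rightInverse _
        rw [h1, Multiset.coe_toList]
      exact ⟨Quot.mk r (QuotientAddGroup.mk s), congrArg (Quotient.mk _) hs⟩
  -- counting via the free action
  set g2 : (Quotient (AddAction.orbitRel (ZMod m) (Sym (ZMod n₀) k))) × ZMod m
      → Sym (ZMod n₀) k := fun p => p.2 +ᵥ p.1.out with hg2def
  have hg2 : Function.Bijective g2 := by
    constructor
    · rintro ⟨ω, t⟩ ⟨ω', t'⟩ h
      simp only [hg2def] at h
      have hω : ω = ω' := by
        have horb : ω.out ∈ AddAction.orbit (ZMod m) ω'.out := by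
          refine AddAction.mem_orbit_iff.mpr ⟨-t + t', ?_⟩
          rw [add_vadd, ← h, ← add_vadd]
          simp
        have hsr : (AddAction.orbitRel (ZMod m) (Sym (ZMod n₀) k)) ω.out ω'.out := horb
        have := Quotient.sound (s := AddAction.orbitRel (ZMod m) (Sym (ZMod n₀) k)) hsr
        rwa [Quotient.out_eq, Quotient.out_eq] at this
      subst hω
      have h2 : (-t' + t) +ᵥ ω.out = ω.out := by
        rw [add_vadd, h]
        simp
      have h3 := hfree _ _ h2
      have ht : t = t' := by
        have := neg_add_eq_zero.mp h3
        exact this.symm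
      rw [ht]
    · intro A
      have hout0 : (AddAction.orbitRel (ZMod m) (Sym (ZMod n₀) k)) ((Quotient.mk (AddAction.orbitRel (ZMod m) (Sym (ZMod n₀) k)) A).out) A :=
        Quotient.exact (Quotient.out_eq (Quotient.mk (AddAction.orbitRel (ZMod m) (Sym (ZMod n₀) k)) A))
      have hout : ((Quotient.mk (AddAction.orbitRel (ZMod m) (Sym (ZMod n₀) k)) A).out)
          ∈ AddAction.orbit (ZMod m) A := hout0
      obtain ⟨u, hu⟩ := AddAction.mem_orbit_iff.mp hout
      refine ⟨(Quotient.mk _ A, -u), ?_⟩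
      show (-u) +ᵥ _ = A
      rw [← hu, ← add_vadd]
      simp
  have c1 : Nat.card (Sym (ZMod n₀) k)
      = Nat.card (Quotient (AddAction.orbitRel (ZMod m) (Sym (ZMod n₀) k))) * m := by
    rw [← Nat.card_congr (Equiv.ofBijective g2 hg2), Nat.card_prod, Nat.card_zmod]
  have c2 : Nat.card (Sym (ZMod n₀) k) = (k + n₀ - 1).choose k := by
    rw [Nat.card_eq_fintype_card, Sym.card_sym_eq_choose, ZMod.card]
    congr 1
    omega
  have c3 := Nat.card_eq_of_bijective G hGbij
  rw [c3, ← c2, c1, mul_assoc, hmd, Nat.mul_div_cancel _ hn₀]
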